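/- arXiv:2002.12613 — 4 statements merged into one kernel-verified Lean document; each statement's English description precedes it below -/
import Mathlib

section
/- Let f, l, u : X × Θ → ℝ with l(x,θ) ≤ f(x,θ) and u(x,θ) − l(x,θ) ≤ 2β·σ(x,θ) pointwise, for some β ≥ 0 and σ : X × Θ → ℝ≥0, where Θ is finite. Given points x_1,…,x_T ∈ X and θ_1,…,θ_T with θ_t ∈ argmax_{θ∈Θ} σ(x_t,θ), we have min_{θ∈Θ} (1/T) Σ_{t=1}^T f(x_t,θ) ≥ min_{θ∈Θ} (1/T) Σ_{t=1}^T u(x_t,θ) − (2β/T) Σ_{t=1}^T σ(x_t,θ_t). -/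
open Finset

theorem min_avg_f_ge_min_avg_ucb_minus {X Θ : Type} [Fintype Θ] [Nonempty Θ]
    {T : ℕ} (hT : 0 < T)
    (f l u σ' : X → Θ → ℝ) (β : ℝ) (hβ : 0 ≤ β)
    (hσ : ∀ x θ, 0 ≤ σ' x θ)
    (hl : ∀ x θ, l x θ ≤ f x θ)
    (hul : ∀ x θ, u x θ - l x θ ≤ 2 * β * σ' x θ)
    (xs : Fin T → X) (θs : Fin T → Θ)
    (hθs : ∀ t θ, σ' (xs t) θ ≤ σ' (xs t) (θs t)) :
    univ.inf' univ_nonempty (fun θ => (1 / (T : ℝ)) * ∑ t, u (xs t) θ) -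
        (2 * β / (T : ℝ)) * ∑ t, σ' (xs t) (θs t) ≤
      univ.inf' univ_nonempty (fun θ => (1 / (T : ℝ)) * ∑ t, f (xs t) θ) := by
  have hTpos : (0:ℝ) < T := by exact_mod_cast hT
  apply Finset.le_inf'
  intro θ _
  calc univ.inf' univ_nonempty (fun θ => (1 / (T : ℝ)) * ∑ t, u (xs t) θ) -
        (2 * β / (T : ℝ)) * ∑ t, σ' (xs t) (θs t)
      ≤ (1 / (T : ℝ)) * ∑ t, u (xs t) θ - (2 * β / (T : ℝ)) * ∑ t, σ' (xs t) (θs t) := by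
        gcongr
        exact Finset.inf'_le _ (mem_univ θ)
    _ = (1 / (T : ℝ)) * ∑ t, (u (xs t) θ - 2 * β * σ' (xs t) (θs t)) := by
        rw [Finset.sum_sub_distrib, ← Finset.mul_sum, mul_sub]
        ring
    _ ≤ (1 / (T : ℝ)) * ∑ t, f (xs t) θ := by
        gcongr with t
        have h1 := hul (xs t) θ
        have h2 := hl (xs t) θ
        have h3 : 2 * β * σ' (xs t) θ ≤ 2 * β * σ' (xs t) (θs t) := by
          gcongr; exact hθs t θ
        linarith
end

section
/- Combining the learner's optimistic best response, the adversary's no-regret guarantee, and valid confidence bounds yields an approximate maximin guarantee: suppose X is finite, Θ = {θ_1,…,θ_m}, f : X × Θ → [0,1], and for each t = 1,…,T there are functions u_t, l_t : X × Θ → [0,1] with l_t ≤ f ≤ u_t pointwise and u_t − l_t ≤ c_t pointwise for constants c_t ≥ 0. Suppose w_1,…,w_T are probability vectors on {1,…,m}, x_t ∈ argmax_{x} Σ_i w_t[i] u_t(x,θ_i), and the regret bound Σ_{t=1}^T Σ_i w_t[i] u_t(x_t,θ_i) − min_{θ∈Θ} Σ_{t=1}^T u_t(x_t,θ) ≤ R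 holds. Then min_{θ∈Θ} (1/T) Σ_{t=1}^T f(x_t,θ) ≥ max_P min_{θ∈Θ} E_{x∼P}[f(x,θ)] − R/T − (1/T) Σ_{t=1}^T c_t, where the max is over probability distributions P on X. -/
open Finset

theorem gp_mro_core_guarantee {X Θ : Type} [Fintype X] [Fintype Θ]
    [Nonempty X] [Nonempty Θ] {T : ℕ} (hT : 0 < T)
    (f : X → Θ → ℝ) (hf0 : ∀ x θ, 0 ≤ f x θ) (hf1 : ∀ x θ, f x θ ≤ 1)
    (u l : Fin T → X → Θ → ℝ)
    (hu0 : ∀ t x θ, 0 ≤ u t x θ) (hu1 : ∀ t x θ, u t x θ ≤ 1)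
    (hl0 : ∀ t x θ, 0 ≤ l t x θ) (hl1 : ∀ t x θ, l t x θ ≤ 1)
    (hlf : ∀ t x θ, l t x θ ≤ f x θ) (hfu : ∀ t x θ, f x θ ≤ u t x θ)
    (c : Fin T → ℝ) (hc : ∀ t, 0 ≤ c t)
    (hwidth : ∀ t x θ, u t x θ - l t x θ ≤ c t)
    (w : Fin T → Θ → ℝ) (hw0 : ∀ t θ, 0 ≤ w t θ) (hw1 : ∀ t, ∑ θ, w t θ = 1)
    (xs : Fin T → X)
    (hbr : ∀ t x', ∑ θ, w t θ * u t x' θ ≤ ∑ θ, w t θ * u t (xs t) θ)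
    (R : ℝ) (hR : 0 ≤ R)
    (hreg : (∑ t, ∑ θ, w t θ * u t (xs t) θ) -
        univ.inf' univ_nonempty (fun θ => ∑ t, u t (xs t) θ) ≤ R) :
    sSup { v : ℝ | ∃ P : X → ℝ, (∀ x, 0 ≤ P x) ∧ (∑ x, P x) = 1 ∧
        v = univ.inf' univ_nonempty (fun θ => ∑ x, P x * f x θ) }
      - R / (T : ℝ) - (1 / (T : ℝ)) * ∑ t, c t ≤
    univ.inf' univ_nonempty (fun θ => (1 / (T : ℝ)) * ∑ t, f (xs t) θ) := by
  have hTpos : (0:ℝ) < T := by exact_mod_cast hT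
  obtain ⟨θm, -, hθm⟩ := Finset.exists_mem_eq_inf'
    (univ_nonempty : (univ : Finset Θ).Nonempty)
    (fun θ => (1 / (T : ℝ)) * ∑ t, f (xs t) θ)
  rw [hθm, sub_sub, sub_le_iff_le_add]
  have hA : 0 ≤ ∑ t, f (xs t) θm := Finset.sum_nonneg fun t _ => hf0 _ _
  have hC : 0 ≤ ∑ t, c t := Finset.sum_nonneg fun t _ => hc t
  have h1T : (0:ℝ) ≤ 1 / (T : ℝ) := by positivity
  apply Real.sSup_le
  · rintro v ⟨P, hP0, hP1, hveq⟩
    have h1 : ∀ t, v ≤ ∑ θ, w t θ * u t (xs t) θ := by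
      intro t
      calc v = ∑ θ, w t θ * v := by rw [← Finset.sum_mul, hw1 t, one_mul]
        _ ≤ ∑ θ, w t θ * (∑ x, P x * f x θ) := by
            refine Finset.sum_le_sum fun θ _ => mul_le_mul_of_nonneg_left ?_ (hw0 t θ)
            rw [hveq]
            exact Finset.inf'_le _ (mem_univ θ)
        _ = ∑ x, P x * (∑ θ, w t θ * f x θ) := by
            simp only [Finset.mul_sum]
            rw [Finset.sum_comm]
            exact Finset.sum_congr rfl fun x _ => Finset.sum_congr rfl fun θ _ => by ring
        _ ≤ ∑ x, P x * (∑ θ, w t θ * u t x θ) := by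
            refine Finset.sum_le_sum fun x _ => mul_le_mul_of_nonneg_left ?_ (hP0 x)
            exact Finset.sum_le_sum fun θ _ =>
              mul_le_mul_of_nonneg_left (hfu t x θ) (hw0 t θ)
        _ ≤ ∑ x, P x * (∑ θ, w t θ * u t (xs t) θ) := by
            refine Finset.sum_le_sum fun x _ => mul_le_mul_of_nonneg_left ?_ (hP0 x)
            exact hbr t x
        _ = ∑ θ, w t θ * u t (xs t) θ := by rw [← Finset.sum_mul, hP1, one_mul]
    have h2 : (T : ℝ) * v ≤ ∑ t, ∑ θ, w t θ * u t (xs t) θ := by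
      calc (T : ℝ) * v = ∑ _t : Fin T, v := by
            rw [Finset.sum_const, Finset.card_univ, Fintype.card_fin, nsmul_eq_mul]
        _ ≤ _ := Finset.sum_le_sum fun t _ => h1 t
    have h3 : univ.inf' univ_nonempty (fun θ => ∑ t, u t (xs t) θ)
        ≤ ∑ t, u t (xs t) θm := Finset.inf'_le _ (mem_univ θm)
    have h4 : ∑ t, u t (xs t) θm ≤ (∑ t, f (xs t) θm) + ∑ t, c t := by
      rw [← Finset.sum_add_distrib]
      refine Finset.sum_le_sum fun t _ => ?_
      have := hwidth t (xs t) θm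
      have := hlf t (xs t) θm
      linarith
    have h5 : v ≤ ((∑ t, f (xs t) θm) + R + ∑ t, c t) / (T : ℝ) := by
      rw [le_div_iff₀ hTpos]
      linarith
    have h6 : (1 / (T : ℝ)) * ∑ t, f (xs t) θm + (R / (T : ℝ) + (1 / (T : ℝ)) * ∑ t, c t)
        = ((∑ t, f (xs t) θm) + R + ∑ t, c t) / (T : ℝ) := by ring
    linarith
  · exact add_nonneg (mul_nonneg h1T hA)
      (add_nonneg (div_nonneg hR hTpos.le) (mul_nonneg h1T hC))
end

section
/- Sum of posterior standard deviations is bounded via the information gain: let σ_0, σ_1, …, σ_{T−1} be nonnegative reals with σ_{t}^2 ≤ 1 for all t and λ ≥ 1, and define γ_T = (1/2) Σ_{t=1}^T ln(1 + λ^{-1} σ_{t-1}^2). Then Σ_{t=1}^T σ_{t-1} ≤ √(4 T λ γ_T). -/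
lemma key_ineq {s lam : ℝ} (hs0 : 0 ≤ s) (hs1 : s ≤ 1) (hlam : 1 ≤ lam) :
    s ≤ 2 * lam * Real.log (1 + lam⁻¹ * s) := by
  have hlam0 : (0:ℝ) < lam := lt_of_lt_of_le one_pos hlam
  have hx0 : 0 ≤ lam⁻¹ * s := by positivity
  have hx1 : lam⁻¹ * s ≤ 1 := by
    rw [inv_mul_le_iff₀ hlam0, mul_one]; linarith
  set x := lam⁻¹ * s with hxdef
  have hpos : (0:ℝ) < 1 + x := by linarith
  -- log(1+x) ≥ x/(1+x)
  have hlog : x / (1 + x) ≤ Real.log (1 + x) := by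
    have h := Real.log_le_sub_one_of_pos (x := (1 + x)⁻¹) (by positivity)
    rw [Real.log_inv] at h
    have : (1 + x)⁻¹ - 1 = -(x / (1 + x)) := by field_simp; ring
    rw [this] at h
    linarith
  have h2 : s ≤ 2 * lam * (x / (1 + x)) := by
    rw [hxdef]
    rw [div_le_iff₀ hpos] at *
    have hls : lam * x = s := by rw [hxdef]; field_simp
    have : 2 * lam * (lam⁻¹ * s / (1 + lam⁻¹ * s)) = 2 * s / (1 + x) := by
      field_simp [hxdef]; linear_combination s * hls
    rw [this, le_div_iff₀ hpos]
    nlinarith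
  calc s ≤ 2 * lam * (x / (1 + x)) := h2
    _ ≤ 2 * lam * Real.log (1 + x) := by
        apply mul_le_mul_of_nonneg_left hlog; linarith

theorem sum_sigma_le_sqrt_gamma {T : ℕ} (hT : 0 < T)
    (σ' : Fin T → ℝ) (hσ0 : ∀ t, 0 ≤ σ' t) (hσ1 : ∀ t, (σ' t) ^ 2 ≤ 1)
    (lam : ℝ) (hlam : 1 ≤ lam)
    (γ : ℝ) (hγ : γ = (1 / 2) * ∑ t, Real.log (1 + lam⁻¹ * (σ' t) ^ 2)) :
    ∑ t, σ' t ≤ Real.sqrt (4 * T * lam * γ) := by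
  have hsum_sq : ∑ t, (σ' t) ^ 2 ≤ 4 * lam * γ := by
    rw [hγ]
    rw [show (4:ℝ) * lam * ((1/2) * ∑ t, Real.log (1 + lam⁻¹ * (σ' t)^2))
        = ∑ t, 2 * lam * Real.log (1 + lam⁻¹ * (σ' t)^2) by
      rw [Finset.mul_sum, Finset.mul_sum]; apply Finset.sum_congr rfl; intros; ring]
    exact Finset.sum_le_sum fun t _ => key_ineq (sq_nonneg _) (hσ1 t) hlam
  have hcs : (∑ t, σ' t) ^ 2 ≤ (T : ℝ) * ∑ t, (σ' t) ^ 2 := by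
    have h := Finset.sum_mul_sq_le_sq_mul_sq Finset.univ (fun _ : Fin T => (1:ℝ)) σ'
    simpa using h
  have h4 : (∑ t, σ' t) ^ 2 ≤ 4 * T * lam * γ := by
    have hT0 : (0:ℝ) ≤ T := Nat.cast_nonneg T
    calc (∑ t, σ' t) ^ 2 ≤ (T : ℝ) * ∑ t, (σ' t) ^ 2 := hcs
      _ ≤ (T : ℝ) * (4 * lam * γ) := mul_le_mul_of_nonneg_left hsum_sq hT0
      _ = 4 * T * lam * γ := by ring
  have hnn : 0 ≤ ∑ t, σ' t := Finset.sum_nonneg fun t _ => hσ0 t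
  calc ∑ t, σ' t = Real.sqrt ((∑ t, σ' t) ^ 2) := by rw [Real.sqrt_sq hnn]
    _ ≤ Real.sqrt (4 * T * lam * γ) := Real.sqrt_le_sqrt h4
end

section
/- Trade-off objective guarantee (abstract Corollary 2): let X be finite, Θ = {θ_1,…,θ_m}, f : X × Θ → [0,1], Q a probability vector on {1,…,m}, and χ ∈ (0,1]. Define W(P) = (1−χ)·Σ_j Q[j] E_{x∼P}[f(x,θ_j)] + χ·min_{θ∈Θ} E_{x∼P}[f(x,θ)]. Suppose for each t there are u_t, l_t : X × Θ → [0,1] with l_t ≤ f ≤ u_t and u_t − l_t ≤ c_t pointwise (c_t ≥ 0), probability vectors w_t on {1,…,m}, and x_t ∈ argmax_x [ (1−χ) Σ_j Q[j] u_t(x,θ_j) + χ Σ_i w_t[i] u_t(x,θ_i) ], with the adversary regret bound Σ_t Σ_i w_t[i] u_t(x_t,θ_i) − min_θ Σ_t u_t(x_t,θ) ≤ R. Then, letting U be the uniform distribution over x_1,…,x_T, W(U) ≥ max_P W(P) − χR/T − (1/T) Σ_t c_t. -/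
open Finset

theorem tradeoff_objective_guarantee {X Θ : Type} [Fintype X] [Fintype Θ]
    [Nonempty X] [Nonempty Θ] {T : ℕ} (hT : 0 < T)
    (f : X → Θ → ℝ) (hf0 : ∀ x θ, 0 ≤ f x θ) (hf1 : ∀ x θ, f x θ ≤ 1)
    (Q : Θ → ℝ) (hQ0 : ∀ θ, 0 ≤ Q θ) (hQ1 : ∑ θ, Q θ = 1)
    (χ : ℝ) (hχ0 : 0 < χ) (hχ1 : χ ≤ 1)
    (u l : Fin T → X → Θ → ℝ)
    (hu0 : ∀ t x θ, 0 ≤ u t x θ) (hu1 : ∀ t x θ, u t x θ ≤ 1)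
    (hl0 : ∀ t x θ, 0 ≤ l t x θ) (hl1 : ∀ t x θ, l t x θ ≤ 1)
    (hlf : ∀ t x θ, l t x θ ≤ f x θ) (hfu : ∀ t x θ, f x θ ≤ u t x θ)
    (c : Fin T → ℝ) (hc : ∀ t, 0 ≤ c t)
    (hwidth : ∀ t x θ, u t x θ - l t x θ ≤ c t)
    (w : Fin T → Θ → ℝ) (hw0 : ∀ t θ, 0 ≤ w t θ) (hw1 : ∀ t, ∑ θ, w t θ = 1)
    (xs : Fin T → X)
    (hbr : ∀ t x',
      (1 - χ) * ∑ θ, Q θ * u t x' θ + χ * ∑ θ, w t θ * u t x' θ ≤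
        (1 - χ) * ∑ θ, Q θ * u t (xs t) θ + χ * ∑ θ, w t θ * u t (xs t) θ)
    (R : ℝ) (hR : 0 ≤ R)
    (hreg : (∑ t, ∑ θ, w t θ * u t (xs t) θ) -
        univ.inf' univ_nonempty (fun θ => ∑ t, u t (xs t) θ) ≤ R) :
    sSup { v : ℝ | ∃ P : X → ℝ, (∀ x, 0 ≤ P x) ∧ (∑ x, P x) = 1 ∧
        v = (1 - χ) * (∑ θ, Q θ * ∑ x, P x * f x θ) +
            χ * univ.inf' univ_nonempty (fun θ => ∑ x, P x * f x θ) }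
      - χ * R / (T : ℝ) - (1 / (T : ℝ)) * ∑ t, c t ≤
    (1 - χ) * (∑ θ, Q θ * ((1 / (T : ℝ)) * ∑ t, f (xs t) θ)) +
      χ * univ.inf' univ_nonempty (fun θ => (1 / (T : ℝ)) * ∑ t, f (xs t) θ) := by
  have hTpos : (0:ℝ) < T := by exact_mod_cast hT
  have hTne : (T:ℝ) ≠ 0 := ne_of_gt hTpos
  -- pull a nonneg constant through inf'
  have hinf : ∀ (g : Θ → ℝ) (a : ℝ), 0 ≤ a →
      a * univ.inf' univ_nonempty g = univ.inf' univ_nonempty (fun θ => a * g θ) := by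
    intro g a ha
    apply le_antisymm
    · apply le_inf'
      intro b hb
      exact mul_le_mul_of_nonneg_left (inf'_le _ (mem_univ b)) ha
    · obtain ⟨b, hb, hbe⟩ := exists_mem_eq_inf' (univ_nonempty) g
      calc univ.inf' univ_nonempty (fun θ => a * g θ) ≤ a * g b := inf'_le _ hb
        _ = a * univ.inf' univ_nonempty g := by rw [hbe]
  rw [sub_sub, sub_le_iff_le_add]
  apply csSup_le
  · -- nonempty: uniform distribution
    obtain ⟨x0⟩ := (inferInstance : Nonempty X)
    have hcard : (0:ℝ) < Fintype.card X := by
      exact_mod_cast Fintype.card_pos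
    refine ⟨_, fun _ => (Fintype.card X : ℝ)⁻¹, fun x => by positivity, ?_, rfl⟩
    simp [Finset.sum_const, card_univ, mul_inv_cancel₀ (ne_of_gt hcard)]
  intro v hv
  obtain ⟨P, hP0, hP1, rfl⟩ := hv
  set m := univ.inf' univ_nonempty (fun θ => ∑ t, f (xs t) θ) with hm
  set SQ := ∑ θ, Q θ * ∑ t, f (xs t) θ with hSQ
  -- per-round key inequality
  have key : ∀ t : Fin T,
      (1 - χ) * (∑ θ, Q θ * ∑ x, P x * f x θ) +
        χ * univ.inf' univ_nonempty (fun θ => ∑ x, P x * f x θ) ≤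
      (1 - χ) * ∑ θ, Q θ * u t (xs t) θ + χ * ∑ θ, w t θ * u t (xs t) θ := by
    intro t
    have hPfu : ∀ θ, ∑ x, P x * f x θ ≤ ∑ x, P x * u t x θ := fun θ =>
      sum_le_sum fun x _ => mul_le_mul_of_nonneg_left (hfu t x θ) (hP0 x)
    have h1 : ∑ θ, Q θ * ∑ x, P x * f x θ ≤ ∑ θ, Q θ * ∑ x, P x * u t x θ :=
      sum_le_sum fun θ _ => mul_le_mul_of_nonneg_left (hPfu θ) (hQ0 θ)
    have h2 : univ.inf' univ_nonempty (fun θ => ∑ x, P x * f x θ) ≤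
        ∑ θ, w t θ * ∑ x, P x * u t x θ := by
      calc univ.inf' univ_nonempty (fun θ => ∑ x, P x * f x θ)
          = ∑ θ, w t θ * univ.inf' univ_nonempty (fun θ => ∑ x, P x * f x θ) := by
            rw [← sum_mul, hw1 t, one_mul]
        _ ≤ ∑ θ, w t θ * ∑ x, P x * u t x θ :=
            sum_le_sum fun θ _ => mul_le_mul_of_nonneg_left
              (le_trans (inf'_le _ (mem_univ θ)) (hPfu θ)) (hw0 t θ)
    have swap : (1 - χ) * ∑ θ, Q θ * ∑ x, P x * u t x θ +
        χ * ∑ θ, w t θ * ∑ x, P x * u t x θ =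
        ∑ x, P x * ((1 - χ) * ∑ θ, Q θ * u t x θ + χ * ∑ θ, w t θ * u t x θ) := by
      have hsw : ∀ (g : Θ → ℝ), ∑ θ, g θ * ∑ x, P x * u t x θ =
          ∑ x, P x * ∑ θ, g θ * u t x θ := by
        intro g
        simp_rw [mul_sum]
        rw [sum_comm]
        exact sum_congr rfl fun x _ => sum_congr rfl fun θ _ => by ring
      rw [hsw Q, hsw (w t)]
      have hx : ∀ x : X, P x * ((1 - χ) * ∑ θ, Q θ * u t x θ + χ * ∑ θ, w t θ * u t x θ) =
          (1 - χ) * (P x * ∑ θ, Q θ * u t x θ) + χ * (P x * ∑ θ, w t θ * u t x θ) :=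
        fun x => by ring
      rw [sum_congr rfl fun x _ => hx x, sum_add_distrib, ← mul_sum, ← mul_sum]
    have h3 : ∑ x, P x * ((1 - χ) * ∑ θ, Q θ * u t x θ + χ * ∑ θ, w t θ * u t x θ) ≤
        (1 - χ) * ∑ θ, Q θ * u t (xs t) θ + χ * ∑ θ, w t θ * u t (xs t) θ := by
      calc ∑ x, P x * ((1 - χ) * ∑ θ, Q θ * u t x θ + χ * ∑ θ, w t θ * u t x θ)
          ≤ ∑ x, P x * ((1 - χ) * ∑ θ, Q θ * u t (xs t) θ + χ * ∑ θ, w t θ * u t (xs t) θ) :=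
            sum_le_sum fun x _ => mul_le_mul_of_nonneg_left (hbr t x) (hP0 x)
        _ = (1 - χ) * ∑ θ, Q θ * u t (xs t) θ + χ * ∑ θ, w t θ * u t (xs t) θ := by
            rw [← sum_mul, hP1, one_mul]
    have h12 : (1 - χ) * (∑ θ, Q θ * ∑ x, P x * f x θ) +
        χ * univ.inf' univ_nonempty (fun θ => ∑ x, P x * f x θ) ≤
        (1 - χ) * ∑ θ, Q θ * ∑ x, P x * u t x θ + χ * ∑ θ, w t θ * ∑ x, P x * u t x θ := by
      have hχ' : (0:ℝ) ≤ 1 - χ := by linarith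
      have := mul_le_mul_of_nonneg_left h1 hχ'
      have := mul_le_mul_of_nonneg_left h2 (le_of_lt hχ0)
      linarith
    linarith [swap ▸ h3]
  -- sum the key inequality over t
  have sumkey : (T:ℝ) * ((1 - χ) * (∑ θ, Q θ * ∑ x, P x * f x θ) +
        χ * univ.inf' univ_nonempty (fun θ => ∑ x, P x * f x θ)) ≤
      (1 - χ) * (∑ t, ∑ θ, Q θ * u t (xs t) θ) + χ * ∑ t, ∑ θ, w t θ * u t (xs t) θ := by
    have := sum_le_sum (fun t (_ : t ∈ (univ : Finset (Fin T))) => key t)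
    simpa [sum_add_distrib, ← mul_sum, card_univ, nsmul_eq_mul, mul_add] using this
  -- upper bounds on the u-sums
  have hufc : ∀ θ, ∑ t, u t (xs t) θ ≤ (∑ t, f (xs t) θ) + ∑ t, c t := by
    intro θ
    rw [← sum_add_distrib]
    exact sum_le_sum fun t _ => by
      have := hwidth t (xs t) θ
      have := hlf t (xs t) θ
      linarith
  have hA : ∑ t, ∑ θ, Q θ * u t (xs t) θ ≤ SQ + ∑ t, c t := by
    rw [sum_comm]
    calc ∑ θ, ∑ t, Q θ * u t (xs t) θ = ∑ θ, Q θ * ∑ t, u t (xs t) θ := by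
          simp [mul_sum]
      _ ≤ ∑ θ, Q θ * ((∑ t, f (xs t) θ) + ∑ t, c t) :=
          sum_le_sum fun θ _ => mul_le_mul_of_nonneg_left (hufc θ) (hQ0 θ)
      _ = SQ + ∑ t, c t := by
          simp [mul_add, sum_add_distrib, ← sum_mul, hQ1, hSQ]
  have hinfu : univ.inf' univ_nonempty (fun θ => ∑ t, u t (xs t) θ) ≤ m + ∑ t, c t := by
    obtain ⟨b, hb, hbe⟩ := exists_mem_eq_inf' (univ_nonempty (α := Θ))
      (fun θ => ∑ t, f (xs t) θ)
    calc univ.inf' univ_nonempty (fun θ => ∑ t, u t (xs t) θ) ≤ ∑ t, u t (xs t) b :=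
          inf'_le _ hb
      _ ≤ (∑ t, f (xs t) b) + ∑ t, c t := hufc b
      _ = m + ∑ t, c t := by rw [hm, hbe]
  have hB : ∑ t, ∑ θ, w t θ * u t (xs t) θ ≤ m + ∑ t, c t + R := by linarith
  -- combine
  have main : (T:ℝ) * ((1 - χ) * (∑ θ, Q θ * ∑ x, P x * f x θ) +
        χ * univ.inf' univ_nonempty (fun θ => ∑ x, P x * f x θ)) ≤
      (1 - χ) * SQ + χ * m + χ * R + ∑ t, c t := by
    have hχ' : (0:ℝ) ≤ 1 - χ := by linarith
    nlinarith [mul_le_mul_of_nonneg_left hA hχ', mul_le_mul_of_nonneg_left hB (le_of_lt hχ0)]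
  -- rewrite the RHS of the goal
  have hRHS : (1 - χ) * (∑ θ, Q θ * ((1 / (T:ℝ)) * ∑ t, f (xs t) θ)) +
      χ * univ.inf' univ_nonempty (fun θ => (1 / (T:ℝ)) * ∑ t, f (xs t) θ) +
      (χ * R / (T:ℝ) + (1 / (T:ℝ)) * ∑ t, c t) =
      (1 / (T:ℝ)) * ((1 - χ) * SQ + χ * m + χ * R + ∑ t, c t) := by
    have h1 : univ.inf' univ_nonempty (fun θ => (1 / (T:ℝ)) * ∑ t, f (xs t) θ) =
        (1 / (T:ℝ)) * m := by
      rw [hm, hinf _ _ (by positivity)]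
    rw [h1, hSQ]
    have h2 : ∑ θ, Q θ * ((1 / (T:ℝ)) * ∑ t, f (xs t) θ) =
        (1 / (T:ℝ)) * ∑ θ, Q θ * ∑ t, f (xs t) θ := by
      rw [mul_sum]; exact sum_congr rfl fun θ _ => by ring
    rw [h2]
    field_simp
    ring
  rw [hRHS]
  have h := mul_le_mul_of_nonneg_left main (show (0:ℝ) ≤ 1/(T:ℝ) by positivity)
  rw [← mul_assoc, one_div, inv_mul_cancel₀ hTne, one_mul] at h
  simpa [one_div] using h
end
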